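/- In the setting of Lemma 1 of the paper: with independent X_n satisfying the flat-threshold F^α-scheme (F_n = F^{α_n} on (ℓ,∞), δ_n = 0), setting h = F(ℓ), b_m = P(I_m = 1, M_m ≤ ℓ), one has P(I_m = 1) = (α_m/s_m)(1 − h^{s_m}) + b_m, and hence P(I_m = 1) = α_m/s_m + θ_m with |θ_m| ≤ h^{s_m}. -/

import Mathlib

open MeasureTheory ProbabilityTheory Filter Set
open intervalIntegral


lemma FT.nonneg {F : ℝ → ℝ} (hFmono : Monotone F) (hF0 : Tendsto F atBot (nhds 0)) (x : ℝ) :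
    0 ≤ F x :=
  le_of_tendsto hF0 (eventually_atBot.2 ⟨x, fun _ hy => hFmono hy⟩)

lemma FT.le_one {F : ℝ → ℝ} (hFmono : Monotone F) (hF1 : Tendsto F atTop (nhds 1)) (x : ℝ) :
    F x ≤ 1 :=
  ge_of_tendsto hF1 (eventually_atTop.2 ⟨x, fun _ hy => hFmono hy⟩)

private lemma one_div_mono {i j : ℕ} (hij : i ≤ j) : (1:ℝ) / (j + 1) ≤ 1 / (i + 1) := by
  apply one_div_le_one_div_of_le (by positivity)
  exact_mod_cast add_le_add_left (Nat.cast_le.2 hij) 1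

/-- CDF value at `Iic ℓ` by right continuity. -/
lemma FT.cdf_Iic_base {F : ℝ → ℝ} (hFcont : Continuous F)
    {μ : Measure ℝ} [IsProbabilityMeasure μ] {a ℓ : ℝ} (ha : 0 < a)
    (hdf : ∀ x, ℓ < x → μ (Iic x) = ENNReal.ofReal (F x ^ a)) :
    μ (Iic ℓ) = ENNReal.ofReal (F ℓ ^ a) := by
  have hInter : ⋂ k : ℕ, Iic (ℓ + 1 / ((k : ℝ) + 1)) = Iic ℓ := by
    ext y
    simp only [mem_iInter, mem_Iic]
    constructor
    · intro hy
      by_contra hxy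
      push_neg at hxy
      obtain ⟨k, hk⟩ := exists_nat_one_div_lt (sub_pos.2 hxy)
      have := hy k
      linarith
    · intro hy k
      have : (0:ℝ) < 1 / ((k : ℝ) + 1) := by positivity
      linarith
  have hanti : Antitone fun k : ℕ => Iic (ℓ + 1 / ((k : ℝ) + 1)) := by
    intro i j hij
    exact Iic_subset_Iic.2 (by have := one_div_mono hij; linarith)
  have h1 : Tendsto (fun k : ℕ => μ (Iic (ℓ + 1 / ((k : ℝ) + 1)))) atTop (nhds (μ (Iic ℓ))) := by
    have := tendsto_measure_iInter_atTop (μ := μ)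
      (fun k : ℕ => measurableSet_Iic.nullMeasurableSet) hanti ⟨0, measure_ne_top μ _⟩
    rwa [hInter] at this
  have h2 : Tendsto (fun k : ℕ => μ (Iic (ℓ + 1 / ((k : ℝ) + 1)))) atTop
      (nhds (ENNReal.ofReal (F ℓ ^ a))) := by
    have hxk : ∀ k : ℕ, μ (Iic (ℓ + 1 / ((k : ℝ) + 1)))
        = ENNReal.ofReal (F (ℓ + 1 / ((k : ℝ) + 1)) ^ a) := by
      intro k
      refine hdf _ ?_
      have : (0:ℝ) < 1 / ((k : ℝ) + 1) := by positivity
      linarith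
    simp_rw [hxk]
    have hlim : Tendsto (fun k : ℕ => ℓ + 1 / ((k : ℝ) + 1)) atTop (nhds ℓ) := by
      have h := tendsto_one_div_add_atTop_nhds_zero_nat (𝕜 := ℝ)
      have := (tendsto_const_nhds (x := ℓ) (f := (atTop : Filter ℕ))).add h
      simpa using this
    have hF : Tendsto (fun k : ℕ => F (ℓ + 1 / ((k : ℝ) + 1)) ^ a) atTop (nhds (F ℓ ^ a)) :=
      (Real.continuousAt_rpow_const (F ℓ) a (Or.inr ha.le)).tendsto.comp
        (hFcont.continuousAt.tendsto.comp hlim)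
    exact ENNReal.continuous_ofReal.continuousAt.tendsto.comp hF
  exact tendsto_nhds_unique h1 h2

lemma FT.cdf_Iic {F : ℝ → ℝ} (hFcont : Continuous F)
    {μ : Measure ℝ} [IsProbabilityMeasure μ] {a ℓ : ℝ} (ha : 0 < a)
    (hdf : ∀ x, ℓ < x → μ (Iic x) = ENNReal.ofReal (F x ^ a)) :
    ∀ x, ℓ ≤ x → μ (Iic x) = ENNReal.ofReal (F x ^ a) := by
  intro x hx
  rcases hx.lt_or_eq with hlt | rfl
  · exact hdf x hlt
  · exact FT.cdf_Iic_base hFcont ha hdf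

/-- CDF value at `Iio x` for `x > ℓ`. -/
lemma FT.cdf_Iio {F : ℝ → ℝ} (hFcont : Continuous F)
    {μ : Measure ℝ} [IsProbabilityMeasure μ] {a ℓ : ℝ} (ha : 0 < a)
    (hdf : ∀ x, ℓ < x → μ (Iic x) = ENNReal.ofReal (F x ^ a)) :
    ∀ x, ℓ < x → μ (Iio x) = ENNReal.ofReal (F x ^ a) := by
  intro x hx
  have hUnion : ⋃ k : ℕ, Iic (x - 1 / ((k : ℝ) + 1)) = Iio x := by
    ext y
    simp only [mem_iUnion, mem_Iic, mem_Iio]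
    constructor
    · rintro ⟨k, hk⟩
      have : (0:ℝ) < 1 / ((k : ℝ) + 1) := by positivity
      linarith
    · intro hy
      obtain ⟨k, hk⟩ := exists_nat_one_div_lt (sub_pos.2 hy)
      exact ⟨k, by linarith⟩
  have hmono : Monotone fun k : ℕ => Iic (x - 1 / ((k : ℝ) + 1)) := by
    intro i j hij
    exact Iic_subset_Iic.2 (by have := one_div_mono hij; linarith)
  have h1 : Tendsto (fun k : ℕ => μ (Iic (x - 1 / ((k : ℝ) + 1)))) atTop (nhds (μ (Iio x))) := by
    have := tendsto_measure_iUnion_atTop (μ := μ) hmono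
    rwa [hUnion] at this
  have h2 : Tendsto (fun k : ℕ => μ (Iic (x - 1 / ((k : ℝ) + 1)))) atTop
      (nhds (ENNReal.ofReal (F x ^ a))) := by
    have hev : ∀ᶠ k : ℕ in atTop, ENNReal.ofReal (F (x - 1 / ((k : ℝ) + 1)) ^ a)
        = μ (Iic (x - 1 / ((k : ℝ) + 1))) := by
      obtain ⟨K, hK⟩ := exists_nat_one_div_lt (sub_pos.2 hx)
      filter_upwards [eventually_ge_atTop K] with k hk
      refine (hdf _ ?_).symm
      have := one_div_mono hk
      linarith
    have hlim : Tendsto (fun k : ℕ => x - 1 / ((k : ℝ) + 1)) atTop (nhds x) := by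
      have h := tendsto_one_div_add_atTop_nhds_zero_nat (𝕜 := ℝ)
      have := (tendsto_const_nhds (x := x) (f := (atTop : Filter ℕ))).sub h
      simpa using this
    have hF : Tendsto (fun k : ℕ => F (x - 1 / ((k : ℝ) + 1)) ^ a) atTop (nhds (F x ^ a)) :=
      (Real.continuousAt_rpow_const (F x) a (Or.inr ha.le)).tendsto.comp
        (hFcont.continuousAt.tendsto.comp hlim)
    exact Tendsto.congr' hev (ENNReal.continuous_ofReal.continuousAt.tendsto.comp hF)
  exact tendsto_nhds_unique h1 h2

/-- For `u < 1` attainable from below, the sublevel set `{F ≤ u}` is a closed ray `Iic T`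
with `F T = u`. -/
lemma FT.levelset {F : ℝ → ℝ} (hFmono : Monotone F) (hFcont : Continuous F)
    (hF1 : Tendsto F atTop (nhds 1)) {u : ℝ} (hu : u < 1) (hne : ∃ x, F x ≤ u) :
    ∃ T, F T = u ∧ {x | F x ≤ u} = Iic T := by
  set A : Set ℝ := {x | F x ≤ u} with hA
  have hclosed : IsClosed A := isClosed_le hFcont continuous_const
  have hAne : A.Nonempty := hne
  obtain ⟨b, hb⟩ : ∃ b, u < F b := (hF1.eventually (eventually_gt_nhds hu)).exists
  have hbdd : BddAbove A := by
    refine ⟨b, fun x hx => ?_⟩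
    by_contra hxb
    push_neg at hxb
    exact absurd (hFmono hxb.le) (by simp only [hA, mem_setOf_eq] at hx; linarith)
  set T := sSup A with hT
  have hTA : T ∈ A := hclosed.csSup_mem hAne hbdd
  have hset : A = Iic T := by
    apply Subset.antisymm
    · exact fun x hx => le_csSup hbdd hx
    · intro x hx
      exact le_trans (hFmono hx) hTA
  refine ⟨T, le_antisymm hTA ?_, hset⟩
  -- F T ≥ u by right continuity: F (T + ε) > u for all ε > 0
  have hgt : ∀ k : ℕ, u ≤ F (T + 1 / ((k : ℝ) + 1)) := by
    intro k
    have hpos : (0:ℝ) < 1 / ((k : ℝ) + 1) := by positivity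
    by_contra hlt
    push_neg at hlt
    have : T + 1 / ((k : ℝ) + 1) ∈ A := le_of_lt hlt
    have := le_csSup hbdd this
    linarith
  have hlim : Tendsto (fun k : ℕ => F (T + 1 / ((k : ℝ) + 1))) atTop (nhds (F T)) := by
    apply hFcont.continuousAt.tendsto.comp
    have h := tendsto_one_div_add_atTop_nhds_zero_nat (𝕜 := ℝ)
    have := (tendsto_const_nhds (x := T) (f := (atTop : Filter ℕ))).add h
    simpa using this
  exact ge_of_tendsto hlim (Eventually.of_forall hgt)

lemma FT.lint_Ioc {a h0 u : ℝ} (ha : 0 < a) (h00 : 0 ≤ h0) (hu : h0 ≤ u) :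
    ∫⁻ w in Ioc h0 u, ENNReal.ofReal (a * w ^ (a - 1)) = ENNReal.ofReal (u ^ a - h0 ^ a) := by
  have hint : IntegrableOn (fun w => a * w ^ (a - 1)) (Ioc h0 u) volume := by
    refine Integrable.const_mul ?_ a
    exact (intervalIntegrable_iff_integrableOn_Ioc_of_le hu).1
      (intervalIntegrable_rpow' (by linarith))
  have hnn : 0 ≤ᶠ[ae (volume.restrict (Ioc h0 u))] fun w => a * w ^ (a - 1) := by
    refine (ae_restrict_iff' measurableSet_Ioc).2 (ae_of_all _ fun w hw => ?_)
    have hw0 : 0 ≤ w := le_trans h00 hw.1.le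
    exact mul_nonneg ha.le (Real.rpow_nonneg hw0 _)
  rw [← ofReal_integral_eq_lintegral_ofReal hint hnn]
  congr 1
  have : ∫ w in Ioc h0 u, a * w ^ (a - 1) = ∫ w in h0..u, a * w ^ (a - 1) :=
    (integral_of_le hu).symm
  rw [this, intervalIntegral.integral_const_mul,
    integral_rpow (Or.inl (by linarith))]
  have h1 : a - 1 + 1 = a := by ring
  rw [h1]
  field_simp
lemma FT.lint_Ioc' {b s h0 u : ℝ} (hb : 0 ≤ b) (hs : 0 < s) (h00 : 0 ≤ h0) (hu : h0 ≤ u) :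
    ∫⁻ w in Ioc h0 u, ENNReal.ofReal (b * w ^ (s - 1))
      = ENNReal.ofReal (b / s * (u ^ s - h0 ^ s)) := by
  have hint : IntegrableOn (fun w => b * w ^ (s - 1)) (Ioc h0 u) volume := by
    refine Integrable.const_mul ?_ b
    exact (intervalIntegrable_iff_integrableOn_Ioc_of_le hu).1
      (intervalIntegrable_rpow' (by linarith))
  have hnn : 0 ≤ᶠ[ae (volume.restrict (Ioc h0 u))] fun w => b * w ^ (s - 1) := by
    refine (ae_restrict_iff' measurableSet_Ioc).2 (ae_of_all _ fun w hw => ?_)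
    exact mul_nonneg hb (Real.rpow_nonneg (le_trans h00 hw.1.le) _)
  rw [← ofReal_integral_eq_lintegral_ofReal hint hnn]
  congr 1
  rw [← integral_of_le hu, intervalIntegral.integral_const_mul, integral_rpow (Or.inl (by linarith))]
  have h1 : s - 1 + 1 = s := by ring
  rw [h1]
  field_simp

lemma FT.lint_pow {c a h0 : ℝ} (ha : 0 < a) (hc : 0 ≤ c) (h00 : 0 ≤ h0) (hh : h0 < 1) :
    ∫⁻ u, ENNReal.ofReal (u ^ c)
        ∂(volume.withDensity ((Ioo h0 1).indicator fun u => ENNReal.ofReal (a * u ^ (a - 1))))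
      = ENNReal.ofReal (a / (c + a) * (1 - h0 ^ (c + a))) := by
  have hd_meas : Measurable ((Ioo h0 1).indicator fun u => ENNReal.ofReal (a * u ^ (a - 1))) :=
    (ENNReal.measurable_ofReal.comp
      ((measurable_id.pow measurable_const).const_mul a)).indicator measurableSet_Ioo
  have hg_meas : Measurable fun u : ℝ => ENNReal.ofReal (u ^ c) :=
    ENNReal.measurable_ofReal.comp (measurable_id.pow measurable_const)
  rw [lintegral_withDensity_eq_lintegral_mul _ hd_meas hg_meas]
  have hind : ∀ u : ℝ, ((Ioo h0 1).indicator (fun u => ENNReal.ofReal (a * u ^ (a - 1))) *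
        fun u : ℝ => ENNReal.ofReal (u ^ c)) u
      = (Ioo h0 1).indicator
          (fun u => ENNReal.ofReal (a * u ^ (a - 1)) * ENNReal.ofReal (u ^ c)) u := by
    intro u
    by_cases hu : u ∈ Ioo h0 1 <;> simp [hu]
  rw [lintegral_congr hind, lintegral_indicator measurableSet_Ioo]
  have hcong : ∀ u ∈ Ioo h0 1, ENNReal.ofReal (a * u ^ (a - 1)) * ENNReal.ofReal (u ^ c)
      = ENNReal.ofReal (a * u ^ (c + a - 1)) := by
    intro u hu
    have hupos : 0 < u := lt_of_le_of_lt h00 hu.1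
    rw [← ENNReal.ofReal_mul (mul_nonneg ha.le (Real.rpow_nonneg hupos.le _))]
    congr 1
    rw [mul_assoc, ← Real.rpow_add hupos]
    ring_nf
  rw [setLIntegral_congr_fun measurableSet_Ioo hcong,
    Measure.restrict_congr_set Ioo_ae_eq_Ioc, FT.lint_Ioc' ha.le (by linarith) h00 hh.le,
    Real.one_rpow]

lemma FT.prod_rpow {b : ℝ} (hb : 0 ≤ b) (α : ℕ → ℝ) (hα : ∀ n, 0 < α n) (n : ℕ) :
    ∏ j ∈ Finset.range n, b ^ α j = b ^ (∑ j ∈ Finset.range n, α j) := by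
  induction n with
  | zero => simp
  | succ n ih =>
    rw [Finset.prod_range_succ, Finset.sum_range_succ, ih, ← Real.rpow_add' hb]
    have h1 : 0 ≤ ∑ j ∈ Finset.range n, α j :=
      Finset.sum_nonneg fun j _ => (hα j).le
    have := hα n
    positivity

lemma FT.map_pi {Ω : Type*} [MeasurableSpace Ω] (P : Measure Ω) [IsProbabilityMeasure P]
    (X : ℕ → Ω → ℝ) (hX : ∀ n, Measurable (X n))
    (hindep : iIndepFun X P) (n : ℕ) :
    P.map (fun ω (i : Fin n) => X i ω) = Measure.pi (fun i : Fin n => P.map (X i)) := by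
  have : ∀ i : Fin n, IsProbabilityMeasure (P.map (X i)) :=
    fun i => Measure.isProbabilityMeasure_map (hX i).aemeasurable
  refine (Measure.pi_eq fun s hs => ?_).symm
  rw [Measure.map_apply (measurable_pi_lambda (fun ω (i : Fin n) => X i ω) fun i => hX i) (MeasurableSet.univ_pi hs)]
  classical
  set sets : ℕ → Set ℝ := fun i => if hi : i < n then s ⟨i, hi⟩ else univ with hsets
  have hpre : (fun ω (i : Fin n) => X i ω) ⁻¹' univ.pi s
      = ⋂ i ∈ Finset.range n, X i ⁻¹' sets i := by
    ext ω
    simp only [mem_preimage, mem_univ_pi, mem_iInter, Finset.mem_range, hsets]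
    constructor
    · intro hω i hi
      simpa [dif_pos hi] using hω ⟨i, hi⟩
    · intro hω i
      have := hω i.1 i.2
      simpa [dif_pos i.2] using this
  rw [hpre, hindep.measure_inter_preimage_eq_mul (Finset.range n)
    (fun i hi => by
      simp only [hsets]
      split_ifs with h
      · exact hs _
      · exact MeasurableSet.univ)]
  rw [← Fin.prod_univ_eq_prod_range (fun i => P (X i ⁻¹' sets i)) n]
  refine Finset.prod_congr rfl fun i _ => ?_
  rw [Measure.map_apply (hX i) (hs i)]
  congr 1
  simp only [hsets, dif_pos i.2, Fin.eta]
/-- The pushforward of `μ` restricted to `(ℓ,∞)` under `F` has density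
`a·u^(a-1)` on `(F ℓ, 1)`. -/
lemma FT.pushforward {F : ℝ → ℝ} (hFmono : Monotone F) (hFcont : Continuous F)
    (hF0 : Tendsto F atBot (nhds 0)) (hF1 : Tendsto F atTop (nhds 1))
    {μ : Measure ℝ} [IsProbabilityMeasure μ] {a ℓ : ℝ} (ha : 0 < a) (hh : F ℓ < 1)
    (hdf : ∀ x, ℓ < x → μ (Iic x) = ENNReal.ofReal (F x ^ a)) :
    (μ.restrict (Ioi ℓ)).map F
      = volume.withDensity ((Ioo (F ℓ) 1).indicator fun u => ENNReal.ofReal (a * u ^ (a - 1))) := by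
  have hIic := FT.cdf_Iic hFcont ha hdf
  have h0 : 0 ≤ F ℓ := FT.nonneg hFmono hF0 ℓ
  have hle1 : ∀ x, F x ≤ 1 := FT.le_one hFmono hF1
  have hfin : IsFiniteMeasure ((μ.restrict (Ioi ℓ)).map F) := by
    constructor
    rw [Measure.map_apply hFcont.measurable MeasurableSet.univ]
    exact lt_of_le_of_lt (le_trans (Measure.restrict_le_self _) (measure_mono (subset_univ _)))
      (by simpa using (measure_lt_top μ univ))
  -- value of the density measure on Iic u for F ℓ ≤ u ≤ 1
  have hRHS : ∀ u : ℝ, F ℓ ≤ u → u ≤ 1 →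
      (volume.withDensity ((Ioo (F ℓ) 1).indicator fun w => ENNReal.ofReal (a * w ^ (a - 1))))
        (Iic u) = ENNReal.ofReal (u ^ a - F ℓ ^ a) := by
    intro u hu hu1
    rw [withDensity_apply _ measurableSet_Iic, lintegral_indicator measurableSet_Ioo,
      Measure.restrict_restrict measurableSet_Ioo]
    have heq : volume.restrict (Ioo (F ℓ) 1 ∩ Iic u) = volume.restrict (Ioc (F ℓ) u) := by
      rcases lt_or_eq_of_le hu1 with hlt | rfl
      · apply congrArg
        ext w
        simp only [mem_inter_iff, mem_Ioo, mem_Iic, mem_Ioc]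
        constructor
        · rintro ⟨⟨h1, _⟩, h2⟩; exact ⟨h1, h2⟩
        · rintro ⟨h1, h2⟩; exact ⟨⟨h1, lt_of_le_of_lt h2 hlt⟩, h2⟩
      · have : Ioo (F ℓ) 1 ∩ Iic 1 = Ioo (F ℓ) 1 := by
          apply inter_eq_self_of_subset_left
          exact fun w hw => hw.2.le
        rw [this]
        exact Measure.restrict_congr_set Ioo_ae_eq_Ioc
    rw [heq]
    exact FT.lint_Ioc ha h0 hu
  -- now identify both measures via their values on Iic
  have := hfin
  refine Measure.ext_of_Iic _ _ fun u => ?_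
  rw [Measure.map_apply hFcont.measurable measurableSet_Iic,
    Measure.restrict_apply (hFcont.measurable measurableSet_Iic)]
  rcases lt_or_ge u (F ℓ) with hu | hu
  · -- both zero
    have hempty : F ⁻¹' Iic u ∩ Ioi ℓ = ∅ := by
      ext z
      simp only [mem_inter_iff, mem_preimage, mem_Iic, mem_Ioi, mem_empty_iff_false,
        iff_false, not_and]
      intro hz hzℓ
      exact absurd (le_trans (hFmono hzℓ.le) hz) (not_le.2 hu)
    rw [hempty]
    rw [withDensity_apply _ measurableSet_Iic, lintegral_indicator measurableSet_Ioo,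
      Measure.restrict_restrict measurableSet_Ioo]
    have hempty2 : Ioo (F ℓ) 1 ∩ Iic u = ∅ := by
      ext w
      simp only [mem_inter_iff, mem_Ioo, mem_Iic, mem_empty_iff_false, iff_false, not_and]
      rintro ⟨h1, _⟩ h2
      exact absurd (lt_of_le_of_lt h2 hu) (lt_asymm h1)
    simp [hempty2]
  · rcases lt_or_ge u 1 with hu1 | hu1
    · -- main case: F ℓ ≤ u < 1
      obtain ⟨T, hFT, hset⟩ := FT.levelset hFmono hFcont hF1 hu1 ⟨ℓ, hu⟩
      have hℓT : ℓ ≤ T := by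
        have : ℓ ∈ {x | F x ≤ u} := hu
        rwa [hset] at this
      have hpre : F ⁻¹' Iic u ∩ Ioi ℓ = Ioc ℓ T := by
        have : F ⁻¹' Iic u = Iic T := hset
        rw [this]
        ext z
        simp only [mem_inter_iff, mem_Iic, mem_Ioi, mem_Ioc]
        tauto
      rw [hpre, hRHS u hu hu1.le, ← hFT]
      -- μ (Ioc ℓ T) = ofReal (F T ^ a - F ℓ ^ a)
      have hdiff : Ioc ℓ T = Iic T \ Iic ℓ := by
        ext z
        simp only [mem_Ioc, mem_diff, mem_Iic, not_le]
        tauto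
      rw [hdiff, measure_diff (Iic_subset_Iic.2 hℓT) measurableSet_Iic.nullMeasurableSet
        (measure_ne_top μ _), hIic T hℓT, hIic ℓ le_rfl,
        ← ENNReal.ofReal_sub _ (Real.rpow_nonneg h0 a)]
    · -- u ≥ 1 : full mass
      have hpre : F ⁻¹' Iic u ∩ Ioi ℓ = Ioi ℓ := by
        apply inter_eq_self_of_subset_right
        exact fun z _ => le_trans (hle1 z) hu1
      rw [hpre]
      have hIoi : μ (Ioi ℓ) = ENNReal.ofReal (1 - F ℓ ^ a) := by
        have hcompl : Ioi ℓ = (Iic ℓ)ᶜ := by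
          ext z; simp [mem_Ioi, mem_Iic, not_le]
        rw [hcompl, measure_compl measurableSet_Iic (measure_ne_top μ _), hIic ℓ le_rfl,
          measure_univ, ← ENNReal.ofReal_one,
          ← ENNReal.ofReal_sub _ (Real.rpow_nonneg h0 a)]
      rw [hIoi]
      -- RHS
      rw [withDensity_apply _ measurableSet_Iic, lintegral_indicator measurableSet_Ioo,
        Measure.restrict_restrict measurableSet_Ioo]
      have hfull : Ioo (F ℓ) 1 ∩ Iic u = Ioo (F ℓ) 1 := by
        apply inter_eq_self_of_subset_left
        exact fun w hw => le_trans hw.2.le hu1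
      rw [hfull, Measure.restrict_congr_set Ioo_ae_eq_Ioc, FT.lint_Ioc ha h0 hh.le,
        Real.one_rpow]


/-- Lemma 1 (first part) of the paper: in a flat-threshold `F^α`-scheme with
independent `X n` whose distribution functions agree with `F^{α n}` above `ℓ`,
setting `h = F ℓ`, `s m = α 0 + ... + α m`, `b m = P(I m = 1, M m ≤ ℓ)`, one has
`P(I m = 1) = (α m / s m)(1 − h^{s m}) + b m` and hence
`|P(I m = 1) − α m / s m| ≤ h^{s m}`. -/
theorem flat_threshold_record_probability
    {Ω : Type*} [MeasurableSpace Ω] (P : Measure Ω) [IsProbabilityMeasure P]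
    (F : ℝ → ℝ) (hFmono : Monotone F) (hFcont : Continuous F)
    (hF0 : Tendsto F atBot (nhds 0)) (hF1 : Tendsto F atTop (nhds 1))
    (α : ℕ → ℝ) (hα : ∀ n, 0 < α n) (ℓ : ℝ) (hh : F ℓ < 1)
    (X : ℕ → Ω → ℝ) (hX : ∀ n, Measurable (X n))
    (hindep : iIndepFun X P)
    (hdf : ∀ n x, ℓ < x → (P {ω | X n ω ≤ x}).toReal = F x ^ α n)
    (m : ℕ) :
    (P {ω | ∀ j < m, X j ω < X m ω}).toReal
        = α m / (∑ k ∈ Finset.range (m + 1), α k)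
            * (1 - F ℓ ^ (∑ k ∈ Finset.range (m + 1), α k))
          + (P ({ω | ∀ j < m, X j ω < X m ω} ∩ {ω | ∀ k ≤ m, X k ω ≤ ℓ})).toReal ∧
    |(P {ω | ∀ j < m, X j ω < X m ω}).toReal
        - α m / (∑ k ∈ Finset.range (m + 1), α k)|
      ≤ F ℓ ^ (∑ k ∈ Finset.range (m + 1), α k) := by
  classical
  haveI hPmap : ∀ n : ℕ, IsProbabilityMeasure (P.map (X n)) :=
    fun n => Measure.isProbabilityMeasure_map (hX n).aemeasurable
  -- law of each X n, in ENNReal form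
  have hdf' : ∀ n, ∀ x, ℓ < x → (P.map (X n)) (Iic x) = ENNReal.ofReal (F x ^ α n) := by
    intro n x hx
    rw [Measure.map_apply (hX n) measurableSet_Iic]
    have hset : X n ⁻¹' Iic x = {ω | X n ω ≤ x} := rfl
    rw [hset, ← ENNReal.ofReal_toReal (measure_ne_top P _), hdf n x hx]
  set s := ∑ k ∈ Finset.range (m + 1), α k with hs_def
  set c := ∑ k ∈ Finset.range m, α k with hc_def
  have hs : 0 < s := Finset.sum_pos (fun k _ => hα k) ⟨m, Finset.self_mem_range_succ m⟩
  have hc0 : 0 ≤ c := Finset.sum_nonneg fun k _ => (hα k).le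
  have hcs : c + α m = s := (Finset.sum_range_succ α m).symm
  have h00 : 0 ≤ F ℓ := FT.nonneg hFmono hF0 ℓ
  have hαs : α m ≤ s := Finset.single_le_sum (fun k (_ : k ∈ Finset.range (m+1)) => (hα k).le)
    (Finset.self_mem_range_succ m)
  have hFs0 : 0 ≤ F ℓ ^ s := Real.rpow_nonneg h00 s
  have hFs1 : F ℓ ^ s ≤ 1 := Real.rpow_le_one h00 hh.le hs.le
  set A := {ω | ∀ j < m, X j ω < X m ω} with hA_def
  set B := {ω | ∀ k ≤ m, X k ω ≤ ℓ} with hB_def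
  set C := {ω | ℓ < X m ω} with hC_def
  have hA_meas : MeasurableSet A := by
    have : A = ⋂ (j : ℕ) (_ : j < m), {ω | X j ω < X m ω} := by
      ext ω; simp [hA_def]
    rw [this]
    exact MeasurableSet.iInter fun j => MeasurableSet.iInter fun _ =>
      measurableSet_lt (hX j) (hX m)
  have hC_meas : MeasurableSet C := measurableSet_lt measurable_const (hX m)
  -- splitting of P A
  have hAB : A \ C = A ∩ B := by
    ext ω
    simp only [hA_def, hB_def, hC_def, mem_diff, mem_inter_iff, mem_setOf_eq, not_lt]
    constructor
    · rintro ⟨h1, h2⟩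
      refine ⟨h1, fun k hk => ?_⟩
      rcases lt_or_eq_of_le hk with hk' | rfl
      · exact le_trans (h1 k hk').le h2
      · exact h2
    · rintro ⟨h1, h2⟩
      exact ⟨h1, h2 m le_rfl⟩
  have hsplit : P (A ∩ C) + P (A ∩ B) = P A := by
    rw [← hAB]; exact measure_inter_add_diff A hC_meas
  -- the joint law
  set W : Ω → (Fin (m + 1) → ℝ) := fun ω i => X i ω with hW_def
  have hW_meas : Measurable W := measurable_pi_lambda _ fun i => hX i
  have hmap : P.map W = Measure.pi (fun i : Fin (m + 1) => P.map (X i)) :=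
    FT.map_pi P X hX hindep (m + 1)
  -- the key event as a set in the product space
  set S : Set (Fin (m + 1) → ℝ) :=
    {y | (∀ j : Fin m, y (Fin.castSucc j) < y (Fin.last m)) ∧ ℓ < y (Fin.last m)} with hS_def
  have hS_meas : MeasurableSet S := by
    have : S = (⋂ j : Fin m, {y : Fin (m+1) → ℝ | y (Fin.castSucc j) < y (Fin.last m)})
        ∩ {y : Fin (m+1) → ℝ | ℓ < y (Fin.last m)} := by
      ext y; simp [hS_def, mem_iInter]
    rw [this]
    refine MeasurableSet.inter (MeasurableSet.iInter fun j => ?_)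
      (measurableSet_lt measurable_const (measurable_pi_apply (Fin.last m)))
    exact measurableSet_lt (measurable_pi_apply (Fin.castSucc j))
      (measurable_pi_apply (Fin.last m))
  have hAC : A ∩ C = W ⁻¹' S := by
    ext ω
    simp only [hA_def, hC_def, hS_def, hW_def, mem_inter_iff, mem_setOf_eq, mem_preimage,
      Fin.coe_castSucc, Fin.val_last]
    constructor
    · rintro ⟨h1, h2⟩
      exact ⟨fun j => h1 j.1 j.2, h2⟩
    · rintro ⟨h1, h2⟩
      exact ⟨fun j hj => h1 ⟨j, hj⟩, h2⟩
  -- disintegrate the last coordinate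
  set T : Set (ℝ × (Fin m → ℝ)) := {p | (∀ j, p.2 j < p.1) ∧ ℓ < p.1} with hT_def
  have hT_meas : MeasurableSet T := by
    have : T = (⋂ j : Fin m, {p : ℝ × (Fin m → ℝ) | p.2 j < p.1})
        ∩ {p : ℝ × (Fin m → ℝ) | ℓ < p.1} := by
      ext p; simp [hT_def, mem_iInter]
    rw [this]
    exact (MeasurableSet.iInter fun j =>
        measurableSet_lt ((measurable_pi_apply _).comp measurable_snd) measurable_fst).inter
      (measurableSet_lt measurable_const measurable_fst)
  have hmp := measurePreserving_piFinSuccAbove (fun i : Fin (m + 1) => P.map (X i)) (Fin.last m)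
  have hST : S = (MeasurableEquiv.piFinSuccAbove (fun _ : Fin (m+1) => ℝ) (Fin.last m)) ⁻¹' T := by
    ext y
    have he : (MeasurableEquiv.piFinSuccAbove (fun _ : Fin (m+1) => ℝ) (Fin.last m)) y
        = (y (Fin.last m), fun j => y ((Fin.last m).succAbove j)) := rfl
    simp only [hS_def, hT_def, mem_preimage, he, mem_setOf_eq, Fin.succAbove_last]
  -- rest-of-coordinates measure
  set ν : Measure (Fin m → ℝ) := Measure.pi (fun j : Fin m => P.map (X j)) with hν_def
  have hrest : (fun j : Fin m => P.map (X ((Fin.last m).succAbove j))) = fun j : Fin m => P.map (X (j : ℕ)) := by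
    funext j
    simp [Fin.succAbove_last]
  have hkey0 : P (A ∩ C) = ((P.map (X m)).prod ν) T := by
    rw [hAC, ← Measure.map_apply hW_meas hS_meas, hmap, hST,
      hmp.measure_preimage hT_meas.nullMeasurableSet, hrest, hν_def]
    simp only [Fin.val_last]
  -- Fubini
  have hsec : ∀ z : ℝ, (Prod.mk z ⁻¹' T)
      = if ℓ < z then {y : Fin m → ℝ | ∀ j, y j < z} else (∅ : Set (Fin m → ℝ)) := by
    intro z
    split_ifs with hz
    · ext y; simp [hT_def, hz]
    · ext y; simp [hT_def, hz]
  have hkey1 : ((P.map (X m)).prod ν) T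
      = ∫⁻ z in Ioi ℓ, ν {y : Fin m → ℝ | ∀ j, y j < z} ∂(P.map (X m)) := by
    rw [Measure.prod_apply hT_meas]
    rw [← lintegral_indicator measurableSet_Ioi]
    congr 1
    funext z
    rw [hsec z]
    by_cases hz : ℓ < z
    · simp [indicator, hz]
    · simp [indicator, hz]
  -- inner measure value
  have hinner : ∀ z ∈ Ioi ℓ, ν {y : Fin m → ℝ | ∀ j, y j < z} = ENNReal.ofReal (F z ^ c) := by
    intro z hz
    have hset : {y : Fin m → ℝ | ∀ j, y j < z} = univ.pi fun _ : Fin m => Iio z := by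
      ext y; simp
    rw [hset, hν_def, Measure.pi_pi]
    have hfac : ∀ j : Fin m, (P.map (X j)) (Iio z) = ENNReal.ofReal (F z ^ α j) :=
      fun j => FT.cdf_Iio hFcont (hα j) (hdf' j) z hz
    calc ∏ j : Fin m, (P.map (X j)) (Iio z)
        = ∏ j : Fin m, ENNReal.ofReal (F z ^ α (j : ℕ)) := Finset.prod_congr rfl fun j _ => hfac j
      _ = ∏ j ∈ Finset.range m, ENNReal.ofReal (F z ^ α j) :=
          Fin.prod_univ_eq_prod_range (fun i => ENNReal.ofReal (F z ^ α i)) m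
      _ = ENNReal.ofReal (∏ j ∈ Finset.range m, F z ^ α j) :=
          (ENNReal.ofReal_prod_of_nonneg fun j _ =>
            Real.rpow_nonneg (FT.nonneg hFmono hF0 z) _).symm
      _ = ENNReal.ofReal (F z ^ c) := by
          rw [FT.prod_rpow (FT.nonneg hFmono hF0 z) α hα m]
  -- change of variables and computation
  have hg_meas : Measurable fun u : ℝ => ENNReal.ofReal (u ^ c) :=
    ENNReal.measurable_ofReal.comp (measurable_id.pow measurable_const)
  have hkey : P (A ∩ C) = ENNReal.ofReal (α m / s * (1 - F ℓ ^ s)) := by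
    rw [hkey0, hkey1, setLIntegral_congr_fun measurableSet_Ioi hinner]
    have : ∫⁻ z in Ioi ℓ, ENNReal.ofReal (F z ^ c) ∂(P.map (X m))
        = ∫⁻ u, ENNReal.ofReal (u ^ c) ∂(((P.map (X m)).restrict (Ioi ℓ)).map F) :=
      (lintegral_map hg_meas hFcont.measurable).symm
    rw [this, FT.pushforward hFmono hFcont hF0 hF1 (hα m) hh (hdf' m),
      FT.lint_pow (hα m) hc0 h00 hh, hcs]
  -- bound on the boundary term
  have hPB : P B = ENNReal.ofReal (F ℓ ^ s) := by
    have hBset : B = W ⁻¹' (univ.pi fun _ : Fin (m + 1) => Iic ℓ) := by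
      ext ω
      simp only [hB_def, hW_def, mem_setOf_eq, mem_preimage, mem_univ_pi, mem_Iic]
      constructor
      · intro hω i
        exact hω i.1 (Nat.lt_succ_iff.1 i.2)
      · intro hω k hk
        exact hω ⟨k, Nat.lt_succ_of_le hk⟩
    rw [hBset, ← Measure.map_apply hW_meas
      (MeasurableSet.univ_pi fun _ => measurableSet_Iic), hmap, Measure.pi_pi]
    have hfac : ∀ i : Fin (m + 1), (P.map (X i)) (Iic ℓ)
        = ENNReal.ofReal (F ℓ ^ α (i : ℕ)) :=
      fun i => FT.cdf_Iic hFcont (hα i) (hdf' i) ℓ le_rfl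
    calc ∏ i : Fin (m + 1), (P.map (X i)) (Iic ℓ)
        = ∏ i : Fin (m + 1), ENNReal.ofReal (F ℓ ^ α (i : ℕ)) :=
          Finset.prod_congr rfl fun i _ => hfac i
      _ = ∏ i ∈ Finset.range (m + 1), ENNReal.ofReal (F ℓ ^ α i) :=
          Fin.prod_univ_eq_prod_range (fun i => ENNReal.ofReal (F ℓ ^ α i)) (m + 1)
      _ = ENNReal.ofReal (∏ i ∈ Finset.range (m + 1), F ℓ ^ α i) :=
          (ENNReal.ofReal_prod_of_nonneg fun i _ => Real.rpow_nonneg h00 _).symm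
      _ = ENNReal.ofReal (F ℓ ^ s) := by rw [FT.prod_rpow h00 α hα (m + 1)]
  -- convert to real numbers
  have hb_le : (P (A ∩ B)).toReal ≤ F ℓ ^ s := by
    have h1 : P (A ∩ B) ≤ ENNReal.ofReal (F ℓ ^ s) :=
      le_trans (measure_mono inter_subset_right) hPB.le
    have := ENNReal.toReal_mono ENNReal.ofReal_ne_top h1
    rwa [ENNReal.toReal_ofReal hFs0] at this
  have hb0 : 0 ≤ (P (A ∩ B)).toReal := ENNReal.toReal_nonneg
  have hfrac0 : 0 ≤ α m / s := div_nonneg (hα m).le hs.le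
  have hfrac1 : α m / s ≤ 1 := (div_le_one hs).2 hαs
  have hmain : (P A).toReal = α m / s * (1 - F ℓ ^ s) + (P (A ∩ B)).toReal := by
    rw [← hsplit, ENNReal.toReal_add (measure_ne_top P _) (measure_ne_top P _), hkey,
      ENNReal.toReal_ofReal (mul_nonneg hfrac0 (by linarith))]
  refine ⟨hmain, ?_⟩
  rw [hmain, abs_le]
  constructor <;> nlinarith [mul_nonneg hfrac0 hFs0]
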